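/- Let P be a finite propositional logic program and M ⊆ At(P). Then M is a stable model of P if and only if there exists a set B ⊆ Neg(P) such that, with B′ = Neg(P) \ B, one has M = LM(P^{B′}), B ∩ M = ∅, and B′ ⊆ M. -/
import Mathlib


open scoped Classical

noncomputable section

/-- A propositional logic program rule: a head atom, a finite positive body and a
finite negative body. -/
structure LPRule (α : Type) where
  head : α
  pos : Finset α
  neg : Finset α
deriving DecidableEq

/-- A logic program is a finite set of rules. -/
abbrev LProgram (α : Type) := Finset (LPRule α)

variable {α : Type} [DecidableEq α]

/-- `horn r`: the Horn rule with the same head and positive body as `r`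
and empty negative body. -/
def LPRule.horn (r : LPRule α) : LPRule α := ⟨r.head, r.pos, ∅⟩

/-- A rule `r` is proper if `h(r) ∉ b⁺(r)` and `b⁺(r) ∩ b⁻(r) = ∅`. -/
def LPRule.proper (r : LPRule α) : Prop := r.head ∉ r.pos ∧ r.pos ∩ r.neg = ∅

/-- `At(P)`: the set of atoms occurring in `P`. -/
def atomsP (P : LProgram α) : Finset α := P.sup (fun r => insert r.head (r.pos ∪ r.neg))

/-- `h(P)`: the set of heads of rules of `P`. -/
def headsP (P : LProgram α) : Finset α := P.image LPRule.head

/-- `Neg(P)`: the set of atoms occurring negated in `P`. -/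
def negP (P : LProgram α) : Finset α := P.sup LPRule.neg

/-- The least model of a (Horn) program `Q`, given as a set of rules (negative bodies
are ignored; Horn rules have empty negative bodies): the least set `M` of atoms such
that `h(r) ∈ M` whenever `r ∈ Q` and `b⁺(r) ⊆ M`. -/
def LM (Q : Set (LPRule α)) : Set α :=
  ⋂₀ {M : Set α | ∀ r ∈ Q, (↑r.pos : Set α) ⊆ M → r.head ∈ M}

/-- The reduct `P^S`: delete every rule whose negative body meets `S` and remove the
negative bodies of the remaining rules. -/
def reduct (P : LProgram α) (S : Set α) : Set (LPRule α) :=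
  LPRule.horn '' {r | r ∈ P ∧ (↑r.neg : Set α) ∩ S = ∅}

/-- `M` is a stable model of `P` if `M = LM (P^M)`. -/
def isStable (P : LProgram α) (M : Set α) : Prop :=
  M = LM (reduct P M)

lemma neg_sub_negP {P : LProgram α} {r : LPRule α} (hr : r ∈ P) :
    (↑r.neg : Set α) ⊆ (↑(negP P) : Set α) := by
  intro x hx
  have : x ∈ negP P := Finset.mem_sup.mpr ⟨r, hr, Finset.mem_coe.mp hx⟩
  exact this

lemma reduct_congr (P : LProgram α) {S T : Set α}
    (h : ∀ x ∈ (↑(negP P) : Set α), (x ∈ S ↔ x ∈ T)) :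
    reduct P S = reduct P T := by
  have hset : {r | r ∈ P ∧ (↑r.neg : Set α) ∩ S = ∅} =
      {r | r ∈ P ∧ (↑r.neg : Set α) ∩ T = ∅} := by
    ext r
    simp only [Set.mem_setOf_eq, and_congr_right_iff]
    intro hr
    have key : (↑r.neg : Set α) ∩ S = (↑r.neg : Set α) ∩ T := by
      ext x
      simp only [Set.mem_inter_iff]
      constructor
      · rintro ⟨hx, hs⟩
        exact ⟨hx, (h x (neg_sub_negP hr hx)).mp hs⟩
      · rintro ⟨hx, ht⟩
        exact ⟨hx, (h x (neg_sub_negP hr hx)).mpr ht⟩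
    rw [key]
  rw [reduct, reduct, hset]

/-- for `M ⊆ At(P)`, `M` is a stable model of `P` iff there exists
`B ⊆ Neg(P)` such that, with `B' = Neg(P) \ B`, `M = LM(P^{B'})`, `B ∩ M = ∅`
and `B' ⊆ M`. -/
theorem stable_iff_neg_subset (P : LProgram α) (M : Set α)
    (hM : M ⊆ (↑(atomsP P) : Set α)) :
    isStable P M ↔
      ∃ B ⊆ (↑(negP P) : Set α),
        M = LM (reduct P ((↑(negP P) : Set α) \ B)) ∧
        B ∩ M = ∅ ∧ (↑(negP P) : Set α) \ B ⊆ M := by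
  
  constructor
  · intro hstab
    refine ⟨(↑(negP P) : Set α) \ M, Set.diff_subset, ?_, ?_, ?_⟩
    · have hred : reduct P ((↑(negP P) : Set α) \ ((↑(negP P) : Set α) \ M)) = reduct P M := by
        apply reduct_congr
        intro x hx
        constructor
        · rintro ⟨_, hnd⟩
          by_contra hm
          exact hnd ⟨hx, hm⟩
        · intro hm
          exact ⟨hx, fun hd => hd.2 hm⟩
      rw [hred]
      exact hstab
    · ext x; simp only [Set.mem_inter_iff, Set.mem_diff, Set.mem_empty_iff_false, iff_false,
        not_and]
      tauto
    · rintro x ⟨hx, hnd⟩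
      by_contra hm
      exact hnd ⟨hx, hm⟩
  · rintro ⟨B, hB, hLM, hBM, hB'M⟩
    have hred : reduct P ((↑(negP P) : Set α) \ B) = reduct P M := by
      apply reduct_congr
      intro x hx
      constructor
      · rintro ⟨_, hnb⟩
        exact hB'M ⟨hx, hnb⟩
      · intro hm
        refine ⟨hx, fun hb => ?_⟩
        have : x ∈ B ∩ M := ⟨hb, hm⟩
        rw [hBM] at this
        exact this
    rw [hred] at hLM
    exact hLM
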